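/- Let p be a prime and let k_o, k_oo be integers with 1 ≤ k_o ≤ p − 2 and 1 ≤ k_oo ≤ p^{k_o} − 2. Then there exists a binary constant-weight code with parameters S = p(p−1)²(p^{k_o} − 1), N = p^{k_o·k_oo}, W = (p−1)²(p^{k_o} − 1), and K = (p−1)²(k_oo − 1) + (p−1)(k_o − 1)(p^{k_o} − 1): namely, all pairwise overlaps are at most K, all N codewords are distinct of length S and weight W. Such a code is obtained by concatenating the (p²−p, p, p−1, 0) modified prime-sequence binary constant-weight code with an outer [p−1, k_o] Reed–Solomon code over GF(p) and then with an outer [p^{k_o}−1, k_oo] Reed–Solomon code over GF(p^{k_o}). -/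

import Mathlib

open Finset Function

/-- Hamming weight of a binary vector. -/
def cwWeight {σ : Type*} [Fintype σ] (a : σ → Bool) : ℕ :=
  (Finset.univ.filter (fun s => a s = true)).card

/-- Overlap (number of common 1-coordinates) of two binary vectors. -/
def cwOverlap {σ : Type*} [Fintype σ] (a b : σ → Bool) : ℕ :=
  (Finset.univ.filter (fun s => a s = true ∧ b s = true)).card

/-- A binary constant-weight code with weight `W` and maximum pairwise overlap `K`:
the codewords are distinct, each has Hamming weight `W`, and every pair of distinct
codewords has overlap at most `K`. -/
def IsCWC {ι σ : Type*} [Fintype σ] (W K : ℕ) (x : ι → σ → Bool) : Prop :=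
  Function.Injective x ∧ (∀ j, cwWeight (x j) = W) ∧
    ∀ j j', j ≠ j' → cwOverlap (x j) (x j') ≤ K

lemma card_filter_comp_equiv {σ τ : Type*} [Fintype σ] [Fintype τ] (e : τ ≃ σ) (P : σ → Prop)
    [DecidablePred P] : (univ.filter fun t => P (e t)).card = (univ.filter P).card :=
  Finset.card_equiv e (by simp)

lemma card_graph {A B : Type*} [Fintype A] [Fintype B] [DecidableEq A] [DecidableEq B]
    (f : A → B) :
    (univ.filter fun st : A × B => st.2 = f st.1).card = Fintype.card A := by
  have h : (univ.filter fun st : A × B => st.2 = f st.1) = univ.image (fun a => (a, f a)) := by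
    ext ⟨a, b⟩
    simp only [mem_filter, mem_univ, true_and, mem_image, Prod.mk.injEq]
    aesop
  rw [h, Finset.card_image_of_injective _ (fun a a' h => congrArg Prod.fst h)]
  exact Finset.card_univ

lemma card_graph_inter {A B : Type*} [Fintype A] [Fintype B] [DecidableEq A] [DecidableEq B]
    (f g : A → B) :
    (univ.filter fun st : A × B => st.2 = f st.1 ∧ st.2 = g st.1).card
      = (univ.filter fun a => f a = g a).card := by
  have h : (univ.filter fun st : A × B => st.2 = f st.1 ∧ st.2 = g st.1)
      = (univ.filter fun a => f a = g a).image (fun a => (a, f a)) := by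
    ext ⟨a, b⟩
    simp only [mem_filter, mem_univ, true_and, mem_image, Prod.mk.injEq]
    aesop
  rw [h, Finset.card_image_of_injective _ (fun a a' h => congrArg Prod.fst h)]

open Polynomial in
lemma rs_card_le {F : Type*} [Field F] [Fintype F] [DecidableEq F] {n : ℕ}
    {m m' : Fin n → F} (h : m ≠ m') :
    (univ.filter fun α : Fˣ =>
      (∑ i : Fin n, m i * (α : F) ^ (i : ℕ)) = ∑ i : Fin n, m' i * (α : F) ^ (i : ℕ)).card
      ≤ n - 1 := by
  set Q : F[X] := ∑ i : Fin n, C (m i - m' i) * X ^ (i : ℕ) with hQdef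
  have hcoeff : ∀ i : Fin n, Q.coeff i = m i - m' i := by
    intro i
    rw [hQdef, finset_sum_coeff]
    rw [Finset.sum_eq_single i]
    · rw [coeff_C_mul, coeff_X_pow, if_pos rfl, mul_one]
    · intro j _ hj
      rw [coeff_C_mul, coeff_X_pow, if_neg (fun hc => hj (Fin.val_injective hc.symm)), mul_zero]
    · simp
  have hQ0 : Q ≠ 0 := by
    obtain ⟨i, hi⟩ := Function.ne_iff.mp h
    intro hc
    apply hi
    have := hcoeff i
    rw [hc, coeff_zero] at this
    exact sub_eq_zero.mp this.symm
  have hdeg : Q.natDegree ≤ n - 1 := by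
    apply natDegree_sum_le_of_forall_le
    intro i _
    refine le_trans (natDegree_C_mul_le _ _) ?_
    rw [natDegree_X_pow]
    omega
  have heval : ∀ a : F, Q.eval a = (∑ i : Fin n, m i * a ^ (i : ℕ))
      - ∑ i : Fin n, m' i * a ^ (i : ℕ) := by
    intro a
    rw [hQdef]
    simp [eval_finset_sum, sub_mul, Finset.sum_sub_distrib]
  have hset : (univ.filter fun α : Fˣ =>
      (∑ i : Fin n, m i * (α : F) ^ (i : ℕ)) = ∑ i : Fin n, m' i * (α : F) ^ (i : ℕ))
      = univ.filter fun α : Fˣ => Q.eval (α : F) = 0 := by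
    apply Finset.filter_congr
    intro α _
    rw [heval, sub_eq_zero]
  rw [hset]
  calc (univ.filter fun α : Fˣ => Q.eval (α : F) = 0).card
      = ((univ.filter fun α : Fˣ => Q.eval (α : F) = 0).image (fun α : Fˣ => (α : F))).card := by
        rw [Finset.card_image_of_injective _ Units.val_injective]
    _ ≤ Q.roots.toFinset.card := by
        apply Finset.card_le_card
        intro a ha
        simp only [Finset.mem_image, Finset.mem_filter, Finset.mem_univ, true_and] at ha
        obtain ⟨α, hα, rfl⟩ := ha
        rw [Multiset.mem_toFinset, mem_roots hQ0]
        exact hα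
    _ ≤ Multiset.card Q.roots := Multiset.toFinset_card_le _
    _ ≤ Q.natDegree := Q.card_roots'
    _ ≤ n - 1 := hdeg

lemma rs_exists_ne {F : Type*} [Field F] [Fintype F] [DecidableEq F] {n : ℕ}
    {m m' : Fin n → F} (h : m ≠ m') (hn : n - 1 < Fintype.card Fˣ) :
    ∃ α : Fˣ, (∑ i : Fin n, m i * (α : F) ^ (i : ℕ)) ≠ ∑ i : Fin n, m' i * (α : F) ^ (i : ℕ) := by
  by_contra hc
  push_neg at hc
  have huniv : (univ.filter fun α : Fˣ =>
      (∑ i : Fin n, m i * (α : F) ^ (i : ℕ)) = ∑ i : Fin n, m' i * (α : F) ^ (i : ℕ)) = univ := by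
    ext α; simp [hc α]
  have h2 := rs_card_le h
  rw [huniv, Finset.card_univ] at h2
  omega

/-- Construction 1 (with two outer Reed–Solomon codes). For a prime `p` and
`1 ≤ k_o ≤ p - 2`, `1 ≤ k_oo ≤ p^{k_o} - 2`, there exists a binary constant-weight code
with parameters `S = p(p-1)²(p^{k_o} - 1)`, `N = p^{k_o k_oo}`,
`W = (p-1)²(p^{k_o} - 1)`, and `K = (p-1)²(k_oo - 1) + (p-1)(k_o - 1)(p^{k_o} - 1)`. -/
theorem construction1_rs_cwc {p ko koo : ℕ} (hp : p.Prime)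
    (hko1 : 1 ≤ ko) (hko2 : ko ≤ p - 2)
    (hkoo1 : 1 ≤ koo) (hkoo2 : koo ≤ p ^ ko - 2) :
    ∃ x : Fin (p ^ (ko * koo)) → Fin (p * (p - 1) ^ 2 * (p ^ ko - 1)) → Bool,
      IsCWC ((p - 1) ^ 2 * (p ^ ko - 1))
        ((p - 1) ^ 2 * (koo - 1) + (p - 1) * (ko - 1) * (p ^ ko - 1)) x := by
  classical
  haveI : Fact p.Prime := ⟨hp⟩
  have hp2 : 2 ≤ p := hp.two_le
  have hp3 : 3 ≤ p := by omega
  have hko0 : ko ≠ 0 := by omega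
  set F := GaloisField p ko with hF
  letI : Fintype F := Fintype.ofFinite F
  have hcardF : Fintype.card F = p ^ ko := by
    rw [← Nat.card_eq_fintype_card]; exact GaloisField.card p ko hko0
  have hq3 : 3 ≤ p ^ ko := by
    have h1 : 1 ≤ p ^ ko := Nat.one_le_pow _ _ (by omega)
    omega
  have hcardFu : Fintype.card Fˣ = p ^ ko - 1 := by
    rw [Fintype.card_units, hcardF]
  have hcardZu : Fintype.card (ZMod p)ˣ = p - 1 := by
    rw [Fintype.card_units, ZMod.card]
  -- basis of F over ZMod p
  let b : Module.Basis (Fin ko) (ZMod p) F :=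
    Module.finBasisOfFinrankEq _ _ (GaloisField.finrank p hko0)
  -- the three encoding layers
  let c1 : (Fin koo → F) → Fˣ → F := fun m α => ∑ i : Fin koo, m i * (α : F) ^ (i : ℕ)
  let c2 : F → (ZMod p)ˣ → ZMod p := fun a β => ∑ i : Fin ko, b.repr a i * (β : ZMod p) ^ (i : ℕ)
  let g : (Fin koo → F) → ((Fˣ × (ZMod p)ˣ) × (ZMod p)ˣ) → ZMod p := fun m a => c2 (c1 m a.1.1) a.1.2 * (a.2 : ZMod p)
  -- index equivalences
  have hcardmsg : Fintype.card (Fin koo → F) = p ^ (ko * koo) := by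
    rw [Fintype.card_fun, hcardF, Fintype.card_fin, ← pow_mul]
  have hcardσ : Fintype.card ((((Fˣ × (ZMod p)ˣ) × (ZMod p)ˣ)) × ZMod p) = p * (p - 1) ^ 2 * (p ^ ko - 1) := by
    rw [Fintype.card_prod, Fintype.card_prod, Fintype.card_prod, hcardFu, hcardZu, ZMod.card]
    ring
  let eN : Fin (p ^ (ko * koo)) ≃ (Fin koo → F) := (Fintype.equivFinOfCardEq hcardmsg).symm
  let eS : Fin (p * (p - 1) ^ 2 * (p ^ ko - 1)) ≃ (((Fˣ × (ZMod p)ˣ) × (ZMod p)ˣ) × ZMod p) :=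
    (Fintype.equivFinOfCardEq hcardσ).symm
  -- the code
  refine ⟨fun j s => decide ((eS s).2 = g (eN j) (eS s).1), ?_, ?_, ?_⟩
  · -- injectivity
    intro j j' hjj
    by_contra hne
    have hm : eN j ≠ eN j' := fun hc => hne (eN.injective hc)
    obtain ⟨α, hα⟩ := rs_exists_ne hm (by rw [hcardFu]; omega)
    have hrepr : (fun i => b.repr (c1 (eN j) α) i) ≠ (fun i => b.repr (c1 (eN j') α) i) := by
      intro hc
      apply hα
      have : b.repr (c1 (eN j) α) = b.repr (c1 (eN j') α) := by
        ext i; exact congrFun hc i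
      exact b.repr.injective this
    obtain ⟨β, hβ⟩ := rs_exists_ne hrepr (by rw [hcardZu]; omega)
    set pt : ((Fˣ × (ZMod p)ˣ) × (ZMod p)ˣ) × ZMod p := (((α, β), 1), g (eN j) ((α, β), 1)) with hpt
    have h3 : (pt.2 = g (eN j) pt.1) ↔ (pt.2 = g (eN j') pt.1) := by
      simpa using congrFun hjj (eS.symm pt)
    have h5 : pt.2 = g (eN j') pt.1 := h3.mp rfl
    apply hβ
    have h6 : c2 (c1 (eN j) α) β * ((1 : (ZMod p)ˣ) : ZMod p)
        = c2 (c1 (eN j') α) β * ((1 : (ZMod p)ˣ) : ZMod p) := h5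
    simpa [c2] using h6
  · -- constant weight
    intro j
    unfold cwWeight
    have hP : ∀ s, (decide ((eS s).2 = g (eN j) (eS s).1) = true)
        = ((eS s).2 = g (eN j) (eS s).1) := by
      intro s; simp
    simp only [hP]
    rw [card_filter_comp_equiv eS (fun st => st.2 = g (eN j) st.1), card_graph]
    show Fintype.card ((Fˣ × (ZMod p)ˣ) × (ZMod p)ˣ) = _
    rw [Fintype.card_prod, Fintype.card_prod, hcardFu, hcardZu]
    ring
  · -- overlap bound
    intro j j' hjj
    have hm : eN j ≠ eN j' := fun hc => hjj (eN.injective hc)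
    unfold cwOverlap
    have hP : ∀ s, ((decide ((eS s).2 = g (eN j) (eS s).1) = true)
        ∧ (decide ((eS s).2 = g (eN j') (eS s).1) = true))
        = ((eS s).2 = g (eN j) (eS s).1 ∧ (eS s).2 = g (eN j') (eS s).1) := by
      intro s; simp
    simp only [hP]
    rw [card_filter_comp_equiv eS
      (fun st => st.2 = g (eN j) st.1 ∧ st.2 = g (eN j') st.1), card_graph_inter]
    -- now bound card over A
    have hsplit : (univ.filter fun a : (Fˣ × (ZMod p)ˣ) × (ZMod p)ˣ => g (eN j) a = g (eN j') a)
        = (univ.filter fun c : Fˣ × (ZMod p)ˣ => c2 (c1 (eN j) c.1) c.2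
            = c2 (c1 (eN j') c.1) c.2) ×ˢ (univ : Finset (ZMod p)ˣ) := by
      ext ⟨⟨α, β⟩, s⟩
      simp only [mem_filter, mem_univ, true_and, Finset.mem_product, and_true]
      constructor
      · intro h
        exact mul_right_cancel₀ (Units.ne_zero s) h
      · intro h
        exact congrArg (· * (s : ZMod p)) h
    rw [hsplit, Finset.card_product, Finset.card_univ, hcardZu]
    -- bound the inner filter card
    have hinner : (univ.filter fun c : Fˣ × (ZMod p)ˣ => c2 (c1 (eN j) c.1) c.2
        = c2 (c1 (eN j') c.1) c.2).card
        ≤ (koo - 1) * (p - 1) + (p ^ ko - 1) * (ko - 1) := by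
      rw [Finset.card_filter]
      rw [Fintype.sum_prod_type]
      have hterm : ∀ α : Fˣ, (∑ β : (ZMod p)ˣ,
          if c2 (c1 (eN j) α) β = c2 (c1 (eN j') α) β then 1 else 0)
          = (univ.filter fun β : (ZMod p)ˣ =>
              c2 (c1 (eN j) α) β = c2 (c1 (eN j') α) β).card := by
        intro α; rw [Finset.card_filter]
      simp only [hterm]
      have hTcard : (univ.filter (fun α : Fˣ => c1 (eN j) α = c1 (eN j') α)).card ≤ koo - 1 :=
        rs_card_le hm
      rw [← Finset.sum_filter_add_sum_filter_not univ
        (fun α : Fˣ => c1 (eN j) α = c1 (eN j') α)]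
      have hb1 : (∑ α ∈ univ.filter (fun α : Fˣ => c1 (eN j) α = c1 (eN j') α),
          (univ.filter fun β : (ZMod p)ˣ =>
          c2 (c1 (eN j) α) β = c2 (c1 (eN j') α) β).card) ≤ (koo - 1) * (p - 1) := by
        calc (∑ α ∈ univ.filter (fun α : Fˣ => c1 (eN j) α = c1 (eN j') α),
              (univ.filter fun β : (ZMod p)ˣ =>
              c2 (c1 (eN j) α) β = c2 (c1 (eN j') α) β).card)
            ≤ ∑ _α ∈ univ.filter (fun α : Fˣ => c1 (eN j) α = c1 (eN j') α), (p - 1) := by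
              apply Finset.sum_le_sum
              intro α _
              calc (univ.filter fun β : (ZMod p)ˣ =>
                    c2 (c1 (eN j) α) β = c2 (c1 (eN j') α) β).card
                  ≤ (univ : Finset (ZMod p)ˣ).card := Finset.card_filter_le _ _
                _ = p - 1 := by rw [Finset.card_univ, hcardZu]
          _ = (univ.filter (fun α : Fˣ => c1 (eN j) α = c1 (eN j') α)).card * (p - 1) := by
              rw [Finset.sum_const, smul_eq_mul]
          _ ≤ (koo - 1) * (p - 1) := Nat.mul_le_mul_right _ hTcard
      have hb2 : (∑ α ∈ univ.filter (fun α : Fˣ => ¬ (c1 (eN j) α = c1 (eN j') α)),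
          (univ.filter fun β : (ZMod p)ˣ =>
            c2 (c1 (eN j) α) β = c2 (c1 (eN j') α) β).card) ≤ (p ^ ko - 1) * (ko - 1) := by
        calc (∑ α ∈ univ.filter (fun α : Fˣ => ¬ (c1 (eN j) α = c1 (eN j') α)),
              (univ.filter fun β : (ZMod p)ˣ =>
                c2 (c1 (eN j) α) β = c2 (c1 (eN j') α) β).card)
            ≤ ∑ _α ∈ univ.filter (fun α : Fˣ => ¬ (c1 (eN j) α = c1 (eN j') α)), (ko - 1) := by
              apply Finset.sum_le_sum
              intro α hα
              rw [Finset.mem_filter] at hα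
              have hne : (fun i => b.repr (c1 (eN j) α) i)
                  ≠ (fun i => b.repr (c1 (eN j') α) i) := by
                intro hc
                apply hα.2
                have : b.repr (c1 (eN j) α) = b.repr (c1 (eN j') α) := by
                  ext i; exact congrFun hc i
                exact b.repr.injective this
              exact rs_card_le hne
          _ = (univ.filter (fun α : Fˣ => ¬ (c1 (eN j) α = c1 (eN j') α))).card * (ko - 1) := by
              rw [Finset.sum_const, smul_eq_mul]
          _ ≤ (p ^ ko - 1) * (ko - 1) := by
              apply Nat.mul_le_mul_right
              calc (univ.filter (fun α : Fˣ => ¬ (c1 (eN j) α = c1 (eN j') α))).card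
                  ≤ (univ : Finset Fˣ).card := Finset.card_filter_le _ _
                _ = p ^ ko - 1 := by rw [Finset.card_univ, hcardFu]
      omega
    calc (univ.filter fun c : Fˣ × (ZMod p)ˣ => c2 (c1 (eN j) c.1) c.2
          = c2 (c1 (eN j') c.1) c.2).card * (p - 1)
        ≤ ((koo - 1) * (p - 1) + (p ^ ko - 1) * (ko - 1)) * (p - 1) :=
          Nat.mul_le_mul_right _ hinner
      _ = (p - 1) ^ 2 * (koo - 1) + (p - 1) * (ko - 1) * (p ^ ko - 1) := by ring
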